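/- arXiv:1303.4935 — 2 statements merged into one kernel-verified Lean document; each statement's English description precedes it below -/
import Mathlib

section
/- Let (G, Ḡ, G*, φ₊, φ₋) be a factorized group, Y ⊂ G a union of conjugacy classes of Ḡ (i.e., Y is stable under conjugation by Ḡ and contained in G), and Y* = ψ⁻¹(Y). Then the Yang–Baxter map R(x,y) = (xL(x,y), xR(x,y)) restricts to a bijection Y* × Y* → Y* × Y*. -/
/-- A factorized group: groups `Gb` (Ḡ) and `Gs` (G*), a normal subgroup `G` of `Gb`,
and group homomorphisms `φp, φm : Gs → Gb` such that `ψ x = φp x * (φm x)⁻¹` is a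
bijection from `Gs` onto `G`. -/
structure FactorizedGroup (Gb Gs : Type*) [Group Gb] [Group Gs] where
  G : Subgroup Gb
  normal : G.Normal
  φp : Gs →* Gb
  φm : Gs →* Gb
  mem_G : ∀ x : Gs, φp x * (φm x)⁻¹ ∈ G
  bij : Function.Bijective (fun x : Gs => (⟨φp x * (φm x)⁻¹, mem_G x⟩ : G))

namespace FactorizedGroup

variable {Gb Gs : Type*} [Group Gb] [Group Gs] (FG : FactorizedGroup Gb Gs)

/-- The map `ψ : G* → Ḡ`. -/
def ψ (x : Gs) : Gb := FG.φp x * (FG.φm x)⁻¹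

/-- The inverse of `ψ` (defined on the image `G` of `ψ`). -/
noncomputable def ψinv (g : Gb) : Gs :=
  haveI : Nonempty Gs := ⟨1⟩
  Function.invFun FG.ψ g

/-- `xR(x,y) = ψ⁻¹(φ₋(x) ψ(y) φ₋(x)⁻¹)`. -/
noncomputable def xR (x y : Gs) : Gs := FG.ψinv (FG.φm x * FG.ψ y * (FG.φm x)⁻¹)

/-- `xL(x,y) = ψ⁻¹(φ₊(xR(x,y))⁻¹ ψ(x) φ₊(xR(x,y)))`. -/
noncomputable def xL (x y : Gs) : Gs :=
  FG.ψinv ((FG.φp (FG.xR x y))⁻¹ * FG.ψ x * FG.φp (FG.xR x y))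

/-- The Yang–Baxter map `R(x,y) = (xL(x,y), xR(x,y))`. -/
noncomputable def Rmap : Gs × Gs → Gs × Gs := fun p => (FG.xL p.1 p.2, FG.xR p.1 p.2)

theorem ψ_injective : Function.Injective FG.ψ := by
  intro a b h
  exact FG.bij.injective (Subtype.ext h)

theorem ψinv_ψ (x : Gs) : FG.ψinv (FG.ψ x) = x := by
  haveI : Nonempty Gs := ⟨1⟩
  exact Function.leftInverse_invFun FG.ψ_injective x

theorem ψ_ψinv {g : Gb} (hg : g ∈ FG.G) : FG.ψ (FG.ψinv g) = g := by
  haveI : Nonempty Gs := ⟨1⟩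
  obtain ⟨x, hx⟩ := FG.bij.2 ⟨g, hg⟩
  have hx' : FG.ψ x = g := congrArg Subtype.val hx
  exact Function.invFun_eq ⟨x, hx'⟩

/-- Explicit inverse of the Yang–Baxter map. -/
noncomputable def Rinv : Gs × Gs → Gs × Gs := fun p =>
  let x := FG.ψinv (FG.φp p.2 * FG.ψ p.1 * (FG.φp p.2)⁻¹)
  (x, FG.ψinv ((FG.φm x)⁻¹ * FG.ψ p.2 * FG.φm x))

end FactorizedGroup


/-- If `Y ⊆ G` is stable under conjugation by `Ḡ` and `Y* = ψ⁻¹(Y)`, then the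
Yang–Baxter map `R` restricts to a bijection `Y* × Y* → Y* × Y*`. -/
theorem factorizedGroup_Rmap_bijOn {Gb Gs : Type*} [Group Gb] [Group Gs]
    (FG : FactorizedGroup Gb Gs) (Y : Set Gb)
    (hYG : Y ⊆ (FG.G : Set Gb))
    (hconj : ∀ g ∈ Y, ∀ h : Gb, h * g * h⁻¹ ∈ Y) :
    Set.BijOn FG.Rmap ((FG.ψ ⁻¹' Y) ×ˢ (FG.ψ ⁻¹' Y)) ((FG.ψ ⁻¹' Y) ×ˢ (FG.ψ ⁻¹' Y)) := by
  have hYconj : ∀ g ∈ Y, ∀ h : Gb, h * g * h⁻¹ ∈ FG.G := fun g hg h => hYG (hconj g hg h)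
  -- ψ of xR and xL on the set
  have hψR : ∀ x y : Gs, FG.ψ x ∈ Y → FG.ψ y ∈ Y →
      FG.ψ (FG.xR x y) = FG.φm x * FG.ψ y * (FG.φm x)⁻¹ := by
    intro x y _ hy
    exact FG.ψ_ψinv (hYconj _ hy _)
  have hψL : ∀ x y : Gs, FG.ψ x ∈ Y → FG.ψ y ∈ Y →
      FG.ψ (FG.xL x y) = (FG.φp (FG.xR x y))⁻¹ * FG.ψ x * FG.φp (FG.xR x y) := by
    intro x y hx _
    have : (FG.φp (FG.xR x y))⁻¹ * FG.ψ x * FG.φp (FG.xR x y)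
        = (FG.φp (FG.xR x y))⁻¹ * FG.ψ x * ((FG.φp (FG.xR x y))⁻¹)⁻¹ := by group
    rw [FactorizedGroup.xL, this]
    exact FG.ψ_ψinv (hYconj _ hx _)
  have hmapsto : Set.MapsTo FG.Rmap ((FG.ψ ⁻¹' Y) ×ˢ (FG.ψ ⁻¹' Y))
      ((FG.ψ ⁻¹' Y) ×ˢ (FG.ψ ⁻¹' Y)) := by
    rintro ⟨x, y⟩ ⟨hx, hy⟩
    refine ⟨?_, ?_⟩
    · show FG.ψ (FG.xL x y) ∈ Y
      rw [hψL x y hx hy]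
      have : (FG.φp (FG.xR x y))⁻¹ * FG.ψ x * FG.φp (FG.xR x y)
          = (FG.φp (FG.xR x y))⁻¹ * FG.ψ x * ((FG.φp (FG.xR x y))⁻¹)⁻¹ := by group
      rw [this]
      exact hconj _ hx _
    · show FG.ψ (FG.xR x y) ∈ Y
      rw [hψR x y hx hy]
      exact hconj _ hy _
  have hmapsto' : Set.MapsTo FG.Rinv ((FG.ψ ⁻¹' Y) ×ˢ (FG.ψ ⁻¹' Y))
      ((FG.ψ ⁻¹' Y) ×ˢ (FG.ψ ⁻¹' Y)) := by
    rintro ⟨u, v⟩ ⟨hu, hv⟩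
    have hx : FG.ψ (FG.ψinv (FG.φp v * FG.ψ u * (FG.φp v)⁻¹))
        = FG.φp v * FG.ψ u * (FG.φp v)⁻¹ := FG.ψ_ψinv (hYconj _ hu _)
    refine ⟨?_, ?_⟩
    · show FG.ψ (FG.ψinv (FG.φp v * FG.ψ u * (FG.φp v)⁻¹)) ∈ Y
      rw [hx]; exact hconj _ hu _
    · set x := FG.ψinv (FG.φp v * FG.ψ u * (FG.φp v)⁻¹)
      show FG.ψ (FG.ψinv ((FG.φm x)⁻¹ * FG.ψ v * FG.φm x)) ∈ Y
      have h2 : (FG.φm x)⁻¹ * FG.ψ v * FG.φm x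
          = (FG.φm x)⁻¹ * FG.ψ v * ((FG.φm x)⁻¹)⁻¹ := by group
      rw [h2, FG.ψ_ψinv (hYconj _ hv _)]
      exact hconj _ hv _
  refine Set.InvOn.bijOn ⟨?_, ?_⟩ hmapsto hmapsto'
  · -- Rinv ∘ Rmap = id on the set
    rintro ⟨x, y⟩ ⟨hx, hy⟩
    have h1 : FG.φp (FG.xR x y) * FG.ψ (FG.xL x y) * (FG.φp (FG.xR x y))⁻¹ = FG.ψ x := by
      rw [hψL x y hx hy]; group
    have hx' : FG.ψinv (FG.φp (FG.xR x y) * FG.ψ (FG.xL x y) * (FG.φp (FG.xR x y))⁻¹) = x := by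
      rw [h1, FG.ψinv_ψ]
    have h2 : (FG.φm x)⁻¹ * FG.ψ (FG.xR x y) * FG.φm x = FG.ψ y := by
      rw [hψR x y hx hy]; group
    show FG.Rinv (FG.Rmap (x, y)) = (x, y)
    simp only [FactorizedGroup.Rmap, FactorizedGroup.Rinv]
    refine Prod.ext hx' ?_
    show FG.ψinv ((FG.φm _)⁻¹ * FG.ψ (FG.xR x y) * FG.φm _) = y
    rw [hx', h2, FG.ψinv_ψ]
  · -- Rmap ∘ Rinv = id on the set
    rintro ⟨u, v⟩ ⟨hu, hv⟩
    show FG.Rmap (FG.Rinv (u, v)) = (u, v)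
    simp only [FactorizedGroup.Rinv]
    set x := FG.ψinv (FG.φp v * FG.ψ u * (FG.φp v)⁻¹) with hxdef
    set y := FG.ψinv ((FG.φm x)⁻¹ * FG.ψ v * FG.φm x) with hydef
    have hψx : FG.ψ x = FG.φp v * FG.ψ u * (FG.φp v)⁻¹ := FG.ψ_ψinv (hYconj _ hu _)
    have hψy : FG.ψ y = (FG.φm x)⁻¹ * FG.ψ v * FG.φm x := by
      have h2 : (FG.φm x)⁻¹ * FG.ψ v * FG.φm x
          = (FG.φm x)⁻¹ * FG.ψ v * ((FG.φm x)⁻¹)⁻¹ := by group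
      rw [hydef, h2]; exact FG.ψ_ψinv (hYconj _ hv _)
    have hR : FG.xR x y = v := by
      have : FG.φm x * FG.ψ y * (FG.φm x)⁻¹ = FG.ψ v := by rw [hψy]; group
      rw [FactorizedGroup.xR, this, FG.ψinv_ψ]
    have hL : FG.xL x y = u := by
      rw [FactorizedGroup.xL, hR]
      have : (FG.φp v)⁻¹ * FG.ψ x * FG.φp v = FG.ψ u := by rw [hψx]; group
      rw [this, FG.ψinv_ψ]
    show (FG.xL x y, FG.xR x y) = (u, v)
    rw [hL, hR]
end

section
/- In the Borel SL₂(ℂ) factorized group, the map s : G* → G* defined by s(x) = ψ⁻¹(φ₋(x)⁻¹ ψ(x) φ₋(x)) is given under the identification G* ≅ ℂ* × ℂ by s(κ, ε) = (κ, ε κ⁻¹). Moreover, for any x ∈ G*, the equation (z, x) = R(x, z) has the unique solution z = s(x). -/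
open Matrix

noncomputable section

/-- `φ₋ : G* → Ḡ` is the inclusion: the pair `(κ, ε)` corresponds to the matrix
`[[1, ε],[0, κ]]`. -/
def phiM (p : ℂˣ × ℂ) : Matrix (Fin 2) (Fin 2) ℂ := !![1, p.2; 0, (p.1 : ℂ)]

/-- `φ₊([[1, ε],[0, κ]]) = [[κ, 0],[0, 1]]`. -/
def phiP (p : ℂˣ × ℂ) : Matrix (Fin 2) (Fin 2) ℂ := !![(p.1 : ℂ), 0; 0, 1]

/-- `ψ(x) = φ₊(x) φ₋(x)⁻¹`. -/
def psiB (p : ℂˣ × ℂ) : Matrix (Fin 2) (Fin 2) ℂ := phiP p * (phiM p)⁻¹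

/-- The inverse of `ψ` (defined on its image `G`). -/
def psiInvB (A : Matrix (Fin 2) (Fin 2) ℂ) : ℂˣ × ℂ := Function.invFun psiB A

/-- `xR(x,y) = ψ⁻¹(φ₋(x) ψ(y) φ₋(x)⁻¹)`. -/
def xRB (x y : ℂˣ × ℂ) : ℂˣ × ℂ := psiInvB (phiM x * psiB y * (phiM x)⁻¹)

/-- `xL(x,y) = ψ⁻¹(φ₊(xR(x,y))⁻¹ ψ(x) φ₊(xR(x,y)))`. -/
def xLB (x y : ℂˣ × ℂ) : ℂˣ × ℂ :=
  psiInvB ((phiP (xRB x y))⁻¹ * psiB x * phiP (xRB x y))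

/-- The Yang–Baxter map `R(x,y) = (xL(x,y), xR(x,y))`. -/
def RB : (ℂˣ × ℂ) × (ℂˣ × ℂ) → (ℂˣ × ℂ) × (ℂˣ × ℂ) :=
  fun p => (xLB p.1 p.2, xRB p.1 p.2)

/-- The map `s(x) = ψ⁻¹(φ₋(x)⁻¹ ψ(x) φ₋(x))`. -/
def sB (x : ℂˣ × ℂ) : ℂˣ × ℂ := psiInvB ((phiM x)⁻¹ * psiB x * phiM x)

lemma phiM_inv (p : ℂˣ × ℂ) : (phiM p)⁻¹ = !![1, -p.2 * (p.1:ℂ)⁻¹; 0, (p.1:ℂ)⁻¹] := by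
  rw [Matrix.inv_eq_right_inv]
  rw [phiM, Matrix.mul_fin_two]
  have := p.1.ne_zero
  field_simp
  rw [Matrix.one_fin_two]
  simp [this]

lemma phiP_inv (p : ℂˣ × ℂ) : (phiP p)⁻¹ = !![(p.1:ℂ)⁻¹, 0; 0, 1] := by
  rw [Matrix.inv_eq_right_inv]
  rw [phiP, Matrix.mul_fin_two]
  have := p.1.ne_zero
  field_simp
  rw [Matrix.one_fin_two]
  simp [this]

lemma psiB_eq (p : ℂˣ × ℂ) : psiB p = !![(p.1:ℂ), -p.2; 0, (p.1:ℂ)⁻¹] := by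
  have := p.1.ne_zero
  rw [psiB, phiM_inv, phiP, Matrix.mul_fin_two]
  ext i j
  fin_cases i <;> fin_cases j <;> simp <;> field_simp <;> ring

lemma psiB_inj : Function.Injective psiB := by
  intro p q h
  rw [psiB_eq, psiB_eq] at h
  have h00 := congrFun (congrFun h 0) 0
  have h01 := congrFun (congrFun h 0) 1
  simp at h00 h01
  exact Prod.ext (Units.ext h00) h01

lemma psiInv_psi (p : ℂˣ × ℂ) : psiInvB (psiB p) = p :=
  Function.leftInverse_invFun psiB_inj p

lemma xRB_eq (a c : ℂˣ) (b d : ℂ) :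
    xRB (a, b) (c, d) = (c, (d + b * (c:ℂ) - b * (c:ℂ)⁻¹) * (a:ℂ)⁻¹) := by
  have key : phiM (a, b) * psiB (c, d) * (phiM (a, b))⁻¹ =
      psiB (c, (d + b * (c:ℂ) - b * (c:ℂ)⁻¹) * (a:ℂ)⁻¹) := by
    have ha := a.ne_zero
    have hc := c.ne_zero
    rw [phiM_inv, psiB_eq, psiB_eq, phiM]
    simp only [Matrix.mul_fin_two]
    ext i j
    fin_cases i <;> fin_cases j <;> simp <;> field_simp <;> ring
  rw [xRB, key]; exact psiInv_psi _

lemma xLB_eq (a c : ℂˣ) (b d : ℂ) :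
    xLB (a, b) (c, d) = (a, b * (c:ℂ)⁻¹) := by
  rw [xLB, xRB_eq]
  have key : (phiP (c, (d + b * (c:ℂ) - b * (c:ℂ)⁻¹) * (a:ℂ)⁻¹))⁻¹ * psiB (a, b) *
      phiP (c, (d + b * (c:ℂ) - b * (c:ℂ)⁻¹) * (a:ℂ)⁻¹) = psiB (a, b * (c:ℂ)⁻¹) := by
    have ha := a.ne_zero
    have hc := c.ne_zero
    rw [phiP_inv, psiB_eq, psiB_eq, phiP]
    simp only [Matrix.mul_fin_two]
    ext i j
    fin_cases i <;> fin_cases j <;> simp <;> field_simp <;> ring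
  rw [key]; exact psiInv_psi _

lemma sB_eq (a : ℂˣ) (b : ℂ) : sB (a, b) = (a, b * (a:ℂ)⁻¹) := by
  have key : (phiM (a, b))⁻¹ * psiB (a, b) * phiM (a, b) = psiB (a, b * (a:ℂ)⁻¹) := by
    have ha := a.ne_zero
    rw [phiM_inv, psiB_eq, psiB_eq, phiM]
    simp only [Matrix.mul_fin_two]
    ext i j
    fin_cases i <;> fin_cases j <;> simp <;> field_simp <;> ring
  rw [sB, key]; exact psiInv_psi _

/-- In the Borel `SL₂(ℂ)` factorized group, `s(κ, ε) = (κ, ε κ⁻¹)`, and for every `x`,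
`z = s(x)` is the unique solution of `R(x, z) = (z, x)`. -/
theorem sB_explicit_and_unique :
    (∀ (κ : ℂˣ) (ε : ℂ), sB (κ, ε) = (κ, ε * (κ : ℂ)⁻¹)) ∧
      ∀ x z : ℂˣ × ℂ, RB (x, z) = (z, x) ↔ z = sB x := by
  refine ⟨fun κ ε => sB_eq κ ε, fun x z => ?_⟩
  obtain ⟨a, b⟩ := x
  obtain ⟨c, d⟩ := z
  rw [sB_eq]
  simp only [RB, xLB_eq, xRB_eq, Prod.mk.injEq]
  have ha := a.ne_zero
  constructor
  · rintro ⟨⟨rfl, rfl⟩, -, -⟩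
    exact ⟨rfl, rfl⟩
  · rintro ⟨rfl, rfl⟩
    refine ⟨⟨rfl, rfl⟩, rfl, ?_⟩
    field_simp
    ring
end
end
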